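/- Suppose the matrix A has rank one, i.e. (a_1 d_0 + b_0 b_1)(a_0 d_1 + c_0 c_1) = (a_0 b_1 + a_1 c_0)(b_0 d_1 + c_1 d_0). If R = K·(a_1 d_0 + b_0 b_1 + K(a_0 b_1 + a_1 c_0)) / ((b_0 + K a_0)(d_0 + K c_0)) > 1, where K = (b_0 d_1 + c_1 d_0)/(a_1 d_0 + b_0 b_1), then x_{2n} → ∞, x_{2n+1} → 0, y_{2n} → ∞ and y_{2n+1} → 0 as n → ∞. -/

import Mathlib

open Finset Filter Topology

private lemma per2' (f : ℕ → ℝ) (h : ∀ n, f (n + 2) = f n) :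
    ∀ m, f (2 * m) = f 0 ∧ f (2 * m + 1) = f 1 := by
  intro m
  induction m with
  | zero => simp
  | succ k ih =>
    constructor
    · have h2 : 2 * (k + 1) = 2 * k + 2 := by ring
      rw [h2, h]; exact ih.1
    · have h2 : 2 * (k + 1) + 1 = (2 * k + 1) + 2 := by ring
      rw [h2, h]; exact ih.2

theorem stmt_10
    (x y a b c d : ℕ → ℝ)
    (hx0 : 0 < x 0) (hy0 : 0 < y 0)
    (hapos : ∀ n, 0 < a n) (hbpos : ∀ n, 0 < b n)
    (hcpos : ∀ n, 0 < c n) (hdpos : ∀ n, 0 < d n)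
    (haper : ∀ n, a (n + 2) = a n) (hbper : ∀ n, b (n + 2) = b n)
    (hcper : ∀ n, c (n + 2) = c n) (hdper : ∀ n, d (n + 2) = d n)
    (hxrec : ∀ n, x (n + 1) = a n / x n + b n / y n)
    (hyrec : ∀ n, y (n + 1) = c n / x n + d n / y n)
    (hrank : (a 1 * d 0 + b 0 * b 1) * (a 0 * d 1 + c 0 * c 1) =
      (a 0 * b 1 + a 1 * c 0) * (b 0 * d 1 + c 1 * d 0))
    (K : ℝ) (hK : K = (b 0 * d 1 + c 1 * d 0) / (a 1 * d 0 + b 0 * b 1))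
    (M : ℝ) (hM : M = a 1 * d 0 + b 0 * b 1 + K * (a 0 * b 1 + a 1 * c 0))
    (R : ℝ) (hR : R = K * M / ((b 0 + K * a 0) * (d 0 + K * c 0)))
    (hRgt : 1 < R)
    : Tendsto (fun n => x (2 * n)) atTop atTop ∧
      Tendsto (fun n => x (2 * n + 1)) atTop (nhds 0) ∧
      Tendsto (fun n => y (2 * n)) atTop atTop ∧
      Tendsto (fun n => y (2 * n + 1)) atTop (nhds 0) := by
  -- positivity of the orbit
  have hxy : ∀ n, 0 < x n ∧ 0 < y n := by
    intro n
    induction n with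
    | zero => exact ⟨hx0, hy0⟩
    | succ k ih =>
      obtain ⟨h1, h2⟩ := ih
      have ha := hapos k; have hb := hbpos k; have hc := hcpos k; have hd := hdpos k
      constructor
      · rw [hxrec]; positivity
      · rw [hyrec]; positivity
  have hxpos : ∀ n, 0 < x n := fun n => (hxy n).1
  have hypos : ∀ n, 0 < y n := fun n => (hxy n).2
  have hpa := per2' a haper
  have hpb := per2' b hbper
  have hpc := per2' c hcper
  have hpd := per2' d hdper
  -- positivity of constants
  have hden : 0 < a 1 * d 0 + b 0 * b 1 := by
    have := hapos 1; have := hdpos 0; have := hbpos 0; have := hbpos 1; positivity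
  have hKpos : 0 < K := by
    rw [hK]
    have := hbpos 0; have := hdpos 1; have := hcpos 1; have := hdpos 0
    positivity
  have hK1 : b 0 * d 1 + c 1 * d 0 = K * (a 1 * d 0 + b 0 * b 1) := by
    rw [hK, div_mul_cancel₀ _ (ne_of_gt hden)]
  have hK2 : a 0 * d 1 + c 0 * c 1 = K * (a 0 * b 1 + a 1 * c 0) := by
    have h := hrank
    rw [hK1] at h
    have hne : (a 1 * d 0 + b 0 * b 1) ≠ 0 := ne_of_gt hden
    have h' : (a 1 * d 0 + b 0 * b 1) * (a 0 * d 1 + c 0 * c 1) =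
        (a 1 * d 0 + b 0 * b 1) * (K * (a 0 * b 1 + a 1 * c 0)) := by
      rw [hrank, hK1]; ring
    exact mul_left_cancel₀ hne h'
  -- one-step formulas at even indices
  have hx1 : ∀ m, x (2 * m + 1) = a 0 / x (2 * m) + b 0 / y (2 * m) := by
    intro m; rw [hxrec, (hpa m).1, (hpb m).1]
  have hy1 : ∀ m, y (2 * m + 1) = c 0 / x (2 * m) + d 0 / y (2 * m) := by
    intro m; rw [hyrec, (hpc m).1, (hpd m).1]
  have hx2 : ∀ m, x (2 * m + 2) = a 1 / x (2 * m + 1) + b 1 / y (2 * m + 1) := by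
    intro m
    have : (2 * m + 2) = (2 * m + 1) + 1 := rfl
    rw [this, hxrec, (hpa m).2, (hpb m).2]
  have hy2 : ∀ m, y (2 * m + 2) = c 1 / x (2 * m + 1) + d 1 / y (2 * m + 1) := by
    intro m
    have : (2 * m + 2) = (2 * m + 1) + 1 := rfl
    rw [this, hyrec, (hpc m).2, (hpd m).2]
  -- the key rank-one consequence: y (2m+2) = K * x (2m+2)
  have hYK : ∀ m, y (2 * m + 2) = K * x (2 * m + 2) := by
    intro m
    have hX := hxpos (2 * m); have hY := hypos (2 * m)
    rw [hx2, hy2, hx1, hy1]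
    set X := x (2 * m)
    set Y := y (2 * m)
    have hP : 0 < a 0 / X + b 0 / Y := by
      have := hapos 0; have := hbpos 0; positivity
    have hQ : 0 < c 0 / X + d 0 / Y := by
      have := hcpos 0; have := hdpos 0; positivity
    have hD1 : a 0 * Y + b 0 * X ≠ 0 := by
      have := hapos 0; have := hbpos 0; positivity
    have hD2 : c 0 * Y + d 0 * X ≠ 0 := by
      have := hcpos 0; have := hdpos 0; positivity
    have := hapos 0; have := hbpos 0; have := hcpos 0; have := hdpos 0
    field_simp [hD1, hD2]
    linear_combination Y * hK2 + X * hK1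
  -- the growth relation x (2m+4) = R * x (2m+2)
  have hRM : R * ((b 0 + K * a 0) * (d 0 + K * c 0)) =
      K * (a 1 * d 0 + b 0 * b 1 + K * (a 0 * b 1 + a 1 * c 0)) := by
    have hb0 : 0 < b 0 + K * a 0 := by have := hbpos 0; have := hapos 0; positivity
    have hd0 : 0 < d 0 + K * c 0 := by have := hdpos 0; have := hcpos 0; positivity
    rw [hR, hM]; field_simp
  have hRstep : ∀ m, x (2 * m + 4) = R * x (2 * m + 2) := by
    intro m
    have hX := hxpos (2 * m + 2)
    have hYe : y (2 * m + 2) = K * x (2 * m + 2) := hYK m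
    have e1 : 2 * m + 4 = 2 * (m + 1) + 2 := by ring
    have e2 : 2 * m + 2 = 2 * (m + 1) := by ring
    rw [e1, hx2, hx1, hy1, ← e2, hYe]
    set X := x (2 * m + 2)
    have hb0 : 0 < b 0 + K * a 0 := by have := hbpos 0; have := hapos 0; positivity
    have hd0 : 0 < d 0 + K * c 0 := by have := hdpos 0; have := hcpos 0; positivity
    have hP : 0 < a 0 / X + b 0 / (K * X) := by
      have := hapos 0; have := hbpos 0; positivity
    have hQ : 0 < c 0 / X + d 0 / (K * X) := by
      have := hcpos 0; have := hdpos 0; positivity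
    have hD1 : a 0 * (K * X) + b 0 * X ≠ 0 := by
      have := hapos 0; have := hbpos 0; positivity
    have hD2 : c 0 * (K * X) + d 0 * X ≠ 0 := by
      have := hcpos 0; have := hdpos 0; positivity
    have := hapos 0; have := hbpos 0; have := hcpos 0; have := hdpos 0
    field_simp [hD1, hD2]
    linear_combination (-1) * hRM
  -- geometric growth
  have hgeo : ∀ m, x (2 * m + 2) = R ^ m * x 2 := by
    intro m
    induction m with
    | zero => simp
    | succ k ih =>
      have e : 2 * (k + 1) + 2 = 2 * k + 4 := by ring
      rw [e, hRstep, ih]; ring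
  have hx2p : 0 < x 2 := hxpos 2
  have htends : Tendsto (fun m => x (2 * m + 2)) atTop atTop := by
    have h1 : Tendsto (fun m : ℕ => R ^ m * x 2) atTop atTop :=
      (tendsto_pow_atTop_atTop_of_one_lt hRgt).atTop_mul_const hx2p
    exact h1.congr fun m => (hgeo m).symm
  have hxe : Tendsto (fun n => x (2 * n)) atTop atTop := by
    apply (tendsto_add_atTop_iff_nat 1).mp
    exact htends.congr fun n => by norm_num [Nat.mul_succ]
  have hye : Tendsto (fun n => y (2 * n)) atTop atTop := by
    apply (tendsto_add_atTop_iff_nat 1).mp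
    have h2 : Tendsto (fun n : ℕ => K * x (2 * n + 2)) atTop atTop :=
      htends.const_mul_atTop hKpos
    refine h2.congr fun n => ?_
    have e : 2 * (n + 1) = 2 * n + 2 := by ring
    rw [e, hYK n]
  have hxo : Tendsto (fun n => x (2 * n + 1)) atTop (nhds 0) := by
    have h1 : Tendsto (fun n => a 0 / x (2 * n)) atTop (nhds 0) :=
      tendsto_const_nhds.div_atTop hxe
    have h2 : Tendsto (fun n => b 0 / y (2 * n)) atTop (nhds 0) :=
      tendsto_const_nhds.div_atTop hye
    have h3 := (h1.add h2).congr fun n => (hx1 n).symm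
    simpa using h3
  have hyo : Tendsto (fun n => y (2 * n + 1)) atTop (nhds 0) := by
    have h1 : Tendsto (fun n => c 0 / x (2 * n)) atTop (nhds 0) :=
      tendsto_const_nhds.div_atTop hxe
    have h2 : Tendsto (fun n => d 0 / y (2 * n)) atTop (nhds 0) :=
      tendsto_const_nhds.div_atTop hye
    have h3 := (h1.add h2).congr fun n => (hy1 n).symm
    simpa using h3
  exact ⟨hxe, hxo, hye, hyo⟩
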